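/- Strong soundness invariant of S-resolution: if clause c^p is derivable by S-resolution from Q : φ with Q(c) = Q₁x₁…Qᵢxᵢ, then for every assignment τ of {x₁,…,xᵢ} that falsifies c (i.e., agrees with the unique falsifying assignment on Var(c)), Pr(Q_{i+1}x_{i+1}…Q_n x_n : φ[τ(x₁)/x₁]…[τ(xᵢ)/xᵢ]) = p. -/

import Mathlib

/-- A quantifier in an SSAT prefix: existential or randomized with probability `p`. -/
inductive SQ where
  | ex : SQ
  | rand : ℝ → SQ

/-- Validity of a quantifier: randomized quantifiers carry a probability `0 < p < 1`. -/
def SQ.valid : SQ → Prop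
  | SQ.ex => True
  | SQ.rand p => 0 < p ∧ p < 1

open Classical in
/-- Maximum satisfaction probability of an SSAT formula, where `k` is the index of the
next variable to be bound and the matrix `φ` is a predicate on total assignments. -/
noncomputable def PrSSAT : List SQ → ℕ → ((ℕ → Bool) → Prop) → ℝ
  | [], _, φ => if ∀ σ, φ σ then 1 else 0
  | SQ.ex :: Q, k, φ =>
      max (PrSSAT Q (k + 1) (fun σ => φ (Function.update σ k true)))
          (PrSSAT Q (k + 1) (fun σ => φ (Function.update σ k false)))
  | SQ.rand p :: Q, k, φ =>
      p * PrSSAT Q (k + 1) (fun σ => φ (Function.update σ k true))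
      + (1 - p) * PrSSAT Q (k + 1) (fun σ => φ (Function.update σ k false))

/-- A (non-tautological) clause: each variable occurs at most once, with
`some true` a positive and `some false` a negative literal. -/
abbrev Clause := ℕ → Option Bool

/-- The clause `c` is satisfied by assignment `σ`. -/
def clauseSat (c : Clause) (σ : ℕ → Bool) : Prop :=
  ∃ j : ℕ, ∃ b : Bool, c j = some b ∧ σ j = b

/-- `σ` agrees with the (unique) falsifying assignment of `c` on the variables of `c`. -/
def Falsifies (σ : ℕ → Bool) (c : Clause) : Prop :=
  ∀ j : ℕ, ∀ b : Bool, c j = some b → σ j = !b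

/-- Satisfaction of a CNF, given as a list of clauses. -/
def cnfSat (φ : List Clause) (σ : ℕ → Bool) : Prop :=
  ∀ c ∈ φ, clauseSat c σ

/-- S-resolution: derivation of annotated clauses `c^p` from the SSAT formula `Q : φ`. -/
inductive SRes (Q : List SQ) (φ : List Clause) : Clause → ℝ → Prop
  /-- R1: an original clause of `φ` is derived with annotation `0`. -/
  | orig (c : Clause) (hc : c ∈ φ) : SRes Q φ c 0
  /-- R2: if every assignment consistent with the falsifying assignment of `c`
  satisfies `φ`, then `c` is derived with annotation `1`. -/
  | sat (c : Clause)
      (hvar : ∀ j : ℕ, ∀ b : Bool, c j = some b → j < Q.length)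
      (h : ∀ σ : ℕ → Bool, Falsifies σ c → cnfSat φ σ) :
      SRes Q φ c 1
  /-- R3: resolution on the quantifier-maximal variable `x`, combining annotations
  by `max` for existential `x` and by the weighted average for randomized `x`. -/
  | res (d₁ d₂ : Clause) (p₁ p₂ : ℝ) (x : ℕ) (q : SQ) (p : ℝ)
      (h₁ : SRes Q φ d₁ p₁) (h₂ : SRes Q φ d₂ p₂)
      (hx1 : d₁ x = some false) (hx2 : d₂ x = some true)
      (hq : Q[x]? = some q)
      (hmax : ∀ j : ℕ, j ≠ x → (d₁ j ≠ none ∨ d₂ j ≠ none) → j < x)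
      (hcompat : ∀ j : ℕ, j ≠ x → ∀ b : Bool, d₁ j = some b → d₂ j ≠ some (!b))
      (hp : p = match q with
        | SQ.ex => max p₁ p₂
        | SQ.rand px => px * p₁ + (1 - px) * p₂) :
      SRes Q φ (fun j => if j = x then none else (d₁ j <|> d₂ j)) p


lemma PrSSAT_one : ∀ (Q : List SQ) (k : ℕ) (φ : (ℕ → Bool) → Prop),
    (∀ σ, φ σ) → PrSSAT Q k φ = 1
  | [], k, φ, h => by simp [PrSSAT, h]
  | SQ.ex :: Q, k, φ, h => by
      simp only [PrSSAT, PrSSAT_one Q (k+1) _ (fun σ => h _), max_self]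
  | SQ.rand p :: Q, k, φ, h => by
      simp only [PrSSAT, PrSSAT_one Q (k+1) _ (fun σ => h _)]; ring

lemma PrSSAT_zero : ∀ (Q : List SQ) (k : ℕ) (φ : (ℕ → Bool) → Prop),
    (∀ σ, ¬ φ σ) → PrSSAT Q k φ = 0
  | [], k, φ, h => by simp [PrSSAT, h]
  | SQ.ex :: Q, k, φ, h => by
      simp only [PrSSAT, PrSSAT_zero Q (k+1) _ (fun σ => h _), max_self]
  | SQ.rand p :: Q, k, φ, h => by
      simp only [PrSSAT, PrSSAT_zero Q (k+1) _ (fun σ => h _)]; ring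

lemma PrSSAT_congr (Q : List SQ) (k : ℕ) {φ ψ : (ℕ → Bool) → Prop}
    (h : ∀ σ, φ σ ↔ ψ σ) : PrSSAT Q k φ = PrSSAT Q k ψ := by
  have : φ = ψ := funext fun σ => propext (h σ)
  rw [this]

lemma assign_update_eq (τ σ : ℕ → Bool) (i : ℕ) (b : Bool) :
    (fun j => if j < i then τ j else (Function.update σ i b) j)
      = (fun j => if j < i + 1 then (Function.update τ i b) j else σ j) := by
  funext j
  simp only [Function.update_apply]
  split_ifs <;> first | rfl | omega

lemma pr_step (Q : List SQ) (φC : List Clause) (c : Clause) (p : ℝ) (x : ℕ)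
    (key : ∀ τ : ℕ → Bool, Falsifies τ c →
      PrSSAT (Q.drop x) x (fun σ => cnfSat φC (fun j => if j < x then τ j else σ j)) = p) :
    ∀ n i, i + n = x → x ≤ Q.length → (∀ j b, c j = some b → j < i) →
      ∀ τ, Falsifies τ c →
        PrSSAT (Q.drop i) i (fun σ => cnfSat φC (fun j => if j < i then τ j else σ j)) = p := by
  intro n
  induction n with
  | zero =>
    intro i hix _ _ τ hτ
    have : i = x := by omega
    subst this
    exact key τ hτ
  | succ n ih =>
    intro i hix hxQ hlt τ hτ
    have hiQ : i < Q.length := by omega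
    have hdrop : Q.drop i = Q[i] :: Q.drop (i+1) := List.drop_eq_getElem_cons hiQ
    have hupd : ∀ b : Bool, Falsifies (Function.update τ i b) c := by
      intro b j b' hj
      have hji := hlt j b' hj
      rw [Function.update_apply]
      rw [if_neg (by omega)]
      exact hτ j b' hj
    have key' : ∀ b : Bool, PrSSAT (Q.drop (i+1)) (i+1)
        (fun σ => cnfSat φC (fun j => if j < i then τ j else Function.update σ i b j)) = p := by
      intro b
      have hstep := ih (i+1) (by omega) hxQ
        (fun j b' hj => Nat.lt_succ_of_lt (hlt j b' hj)) (Function.update τ i b) (hupd b)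
      rw [← hstep]
      exact PrSSAT_congr _ _ (fun σ => by rw [assign_update_eq τ σ i b])
    rw [hdrop]
    cases hq : Q[i] with
    | ex =>
      simp only [PrSSAT]
      rw [key' true, key' false, max_self]
    | rand px =>
      simp only [PrSSAT]
      rw [key' true, key' false]; ring

theorem sres_sound_invariant (Q : List SQ) (φ : List Clause) (c : Clause) (p : ℝ) (i : ℕ)
    (hQ : ∀ q ∈ Q, q.valid)
    (hvars : ∀ c' ∈ φ, ∀ j : ℕ, ∀ b : Bool, c' j = some b → j < Q.length)
    (hder : SRes Q φ c p)
    (hi : i ≤ Q.length)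
    (hlt : ∀ j : ℕ, ∀ b : Bool, c j = some b → j < i)
    (hlast : i = 0 ∨ ∃ b : Bool, c (i - 1) = some b) :
    ∀ τ : ℕ → Bool, Falsifies τ c →
      PrSSAT (Q.drop i) i
        (fun σ => cnfSat φ (fun j => if j < i then τ j else σ j)) = p := by
  induction hder generalizing i with
  | orig c hc =>
    intro τ hτ
    apply PrSSAT_zero
    intro σ hσ
    obtain ⟨j, b, hjb, hjv⟩ := hσ c hc
    have hji := hlt j b hjb
    have hfa := hτ j b hjb
    simp only [hji, if_true] at hjv
    rw [hfa] at hjv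
    simp at hjv
  | sat c hvar h =>
    intro τ hτ
    apply PrSSAT_one
    intro σ
    apply h
    intro j b hjb
    have hji := hlt j b hjb
    simpa [hji] using hτ j b hjb
  | res d₁ d₂ p₁ p₂ x q p h₁ h₂ hx1 hx2 hq hmax hcompat hp ih₁ ih₂ =>
    have hxQ : x < Q.length := by
      rw [List.getElem?_eq_some_iff] at hq; exact hq.1
    have hqx : Q[x] = q := by
      rw [List.getElem?_eq_some_iff] at hq; exact hq.2
    have hix : i ≤ x := by
      rcases hlast with h0 | ⟨b, hb⟩
      · omega
      · by_cases hix' : i - 1 = x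
        · simp [hix'] at hb
        · simp only [hix', if_false] at hb
          have : d₁ (i-1) ≠ none ∨ d₂ (i-1) ≠ none := by
            cases hd : d₁ (i-1) with
            | none => right; rw [hd, Option.orElse_apply, Option.orElse_none] at hb; simp [hb]
            | some b'' => left; simp [hd]
          have := hmax (i-1) hix' this
          omega
    have hc1 : ∀ j b, j ≠ x → d₁ j = some b →
        (fun j => if j = x then none else (d₁ j <|> d₂ j)) j = some b := by
      intro j b hjx hd
      simp only [if_neg hjx, hd, Option.orElse_apply, Option.orElse_some]
    have hc2 : ∀ j b, j ≠ x → d₂ j = some b →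
        (fun j => if j = x then none else (d₁ j <|> d₂ j)) j = some b := by
      intro j b hjx hd
      simp only [if_neg hjx]
      cases hd1 : d₁ j with
      | none => rw [Option.orElse_apply, Option.orElse_none]; exact hd
      | some b' =>
        have hne := hcompat j hjx b' hd1
        rw [hd] at hne
        rw [Option.orElse_apply, Option.orElse_some]
        revert hne
        cases b <;> cases b' <;> simp
    have key : ∀ τ : ℕ → Bool,
        Falsifies τ (fun j => if j = x then none else (d₁ j <|> d₂ j)) →
        PrSSAT (Q.drop x) x (fun σ => cnfSat φ (fun j => if j < x then τ j else σ j)) = p := by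
      intro τ hτ
      have hdrop : Q.drop x = q :: Q.drop (x+1) := by
        rw [List.drop_eq_getElem_cons hxQ, hqx]
      have hτ1 : Falsifies (Function.update τ x true) d₁ := by
        intro j b hj
        by_cases hjx : j = x
        · subst hjx; rw [hj] at hx1; cases hx1; simp
        · rw [Function.update_apply, if_neg hjx]
          exact hτ j b (hc1 j b hjx hj)
      have hτ2 : Falsifies (Function.update τ x false) d₂ := by
        intro j b hj
        by_cases hjx : j = x
        · subst hjx; rw [hj] at hx2; cases hx2; simp
        · rw [Function.update_apply, if_neg hjx]
          exact hτ j b (hc2 j b hjx hj)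
      have hlt1 : ∀ j b, d₁ j = some b → j < x + 1 := by
        intro j b hj
        by_cases hjx : j = x
        · omega
        · exact Nat.lt_succ_of_lt (hmax j hjx (Or.inl (by simp [hj])))
      have hlt2 : ∀ j b, d₂ j = some b → j < x + 1 := by
        intro j b hj
        by_cases hjx : j = x
        · omega
        · exact Nat.lt_succ_of_lt (hmax j hjx (Or.inr (by simp [hj])))
      have hA := ih₁ (x+1) (by omega) hlt1
        (Or.inr ⟨false, by simpa using hx1⟩) (Function.update τ x true) hτ1
      have hB := ih₂ (x+1) (by omega) hlt2
        (Or.inr ⟨true, by simpa using hx2⟩) (Function.update τ x false) hτ2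
      have hA' : PrSSAT (Q.drop (x+1)) (x+1)
          (fun σ => cnfSat φ (fun j => if j < x then τ j else Function.update σ x true j)) = p₁ := by
        rw [← hA]
        exact PrSSAT_congr _ _ (fun σ => by rw [assign_update_eq τ σ x true])
      have hB' : PrSSAT (Q.drop (x+1)) (x+1)
          (fun σ => cnfSat φ (fun j => if j < x then τ j else Function.update σ x false j)) = p₂ := by
        rw [← hB]
        exact PrSSAT_congr _ _ (fun σ => by rw [assign_update_eq τ σ x false])
      rw [hdrop]
      cases q with
      | ex =>
        simp only [PrSSAT]
        rw [hA', hB']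
        exact hp.symm
      | rand px =>
        simp only [PrSSAT]
        rw [hA', hB']
        exact hp.symm
    exact pr_step Q φ _ p x key (x - i) i (by omega) (le_of_lt hxQ) hlt
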